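/- Let γ ∈ H and let i ∈ ℕ₀. Then for every k ≥ 1 one has W_k(i+(p−1)) = p^k·W_k(i), and J_{i+(p−1)}(γ) = p³·J_i(γ). -/

import Mathlib

set_option synthInstance.maxHeartbeats 1000000
set_option maxHeartbeats 1000000

namespace MaximalClassFrame

variable (p : ℕ) [Fact p.Prime]
variable (K : Type) [Field K] [Algebra ℚ_[p] K] [Algebra ℤ_[p] K]
  [IsScalarTower ℤ_[p] ℚ_[p] K]

/-- The maximal order `𝒪` of `K`: the integral closure of `ℤ_p` in `K`. -/
noncomputable abbrev 𝒪 : Subalgebra ℤ_[p] K := integralClosure ℤ_[p] K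

variable (θ : 𝒪 p K)

/-- The maximal ideal `𝔭` of `𝒪`, generated by `κ = θ - 1`. -/
noncomputable def pid : Ideal (𝒪 p K) := Ideal.span {θ - 1}

/-- A `ℤ_p`-bilinear map `γ : 𝒪 × 𝒪 → 𝒪` is `P`-equivariant if it is
alternating and satisfies `γ(θx, θy) = θ·γ(x,y)` for all `x, y`. -/
def IsPEquivariant (γ : 𝒪 p K →ₗ[ℤ_[p]] 𝒪 p K →ₗ[ℤ_[p]] 𝒪 p K) : Prop :=
  (∀ x, γ x x = 0) ∧ ∀ x y, γ (θ * x) (θ * y) = θ * γ x y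

/-- `γ ∈ Ĥ_i`: the additive subgroup of `𝒪` generated by
`{γ(x,y) : x, y ∈ 𝔭^i}` equals `𝔭^(2i+1)`. -/
def InHhat (i : ℕ) (γ : 𝒪 p K →ₗ[ℤ_[p]] 𝒪 p K →ₗ[ℤ_[p]] 𝒪 p K) : Prop :=
  Submodule.span ℤ (Set.image2 (fun x y => γ x y)
      ((pid p K θ ^ i : Ideal (𝒪 p K)) : Set (𝒪 p K))
      ((pid p K θ ^ i : Ideal (𝒪 p K)) : Set (𝒪 p K)))
    = (pid p K θ ^ (2 * i + 1)).restrictScalars ℤ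

variable (γ : 𝒪 p K →ₗ[ℤ_[p]] 𝒪 p K →ₗ[ℤ_[p]] 𝒪 p K)

/-- The ideal `J_i(γ)` of `𝒪` generated by the Jacobi expressions
`γ(γ(x,y),z) + γ(γ(y,z),x) + γ(γ(z,x),y)` for `x, y, z ∈ 𝔭^i`. -/
noncomputable def Jid (i : ℕ) : Ideal (𝒪 p K) :=
  Ideal.span {v : 𝒪 p K | ∃ x ∈ pid p K θ ^ i, ∃ y ∈ pid p K θ ^ i, ∃ z ∈ pid p K θ ^ i,
    v = γ (γ x y) z + γ (γ y z) x + γ (γ z x) y}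

/-- The ideals `W_k(i)`:  `W_1(i) = 𝔭^i` and `W_{k+1}(i)` is the ideal
generated by `{γ(x,y) : x ∈ W_k(i), y ∈ 𝔭^i}`. -/
noncomputable def Wid (i : ℕ) : ℕ → Ideal (𝒪 p K)
  | 0 => ⊤
  | 1 => pid p K θ ^ i
  | (k + 2) => Ideal.span (Set.image2 (fun x y => γ x y)
      ((Wid i (k + 1) : Ideal (𝒪 p K)) : Set (𝒪 p K))
      ((pid p K θ ^ i : Ideal (𝒪 p K)) : Set (𝒪 p K)))

/-- `γ` pulls natural-number scalars out of its first argument. -/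
lemma natmul_left (n : ℕ) (x y : 𝒪 p K) :
    γ ((n : 𝒪 p K) * x) y = (n : 𝒪 p K) * γ x y := by
  rw [← nsmul_eq_mul, ← nsmul_eq_mul, map_nsmul, LinearMap.smul_apply]

/-- `γ` pulls natural-number scalars out of its second argument. -/
lemma natmul_right (n : ℕ) (x y : 𝒪 p K) :
    γ x ((n : 𝒪 p K) * y) = (n : 𝒪 p K) * γ x y := by
  rw [← nsmul_eq_mul, ← nsmul_eq_mul, map_nsmul]

/-- The ramification identity: `𝔭^(p-1) = (p)`. -/
lemma pid_pow_eq (hp : 5 ≤ p) (hθ : IsPrimitiveRoot (θ : K) p) :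
    pid p K θ ^ (p - 1) = Ideal.span {(p : 𝒪 p K)} := by
  have hppos : 0 < p := by omega
  haveI : NeZero p := ⟨by omega⟩
  have hθ1K : (θ : K) ≠ 1 := hθ.ne_one (by omega)
  have hθ1 : θ ≠ 1 := by
    intro h; apply hθ1K; rw [h]; rfl
  have hκ : ((θ : 𝒪 p K) - 1 : 𝒪 p K) ≠ 0 := sub_ne_zero.mpr hθ1
  have hθp : θ ^ p = 1 := by
    apply Subtype.coe_injective
    push_cast
    exact hθ.pow_eq_one
  -- every primitive root gives a unit factor
  have key : ∀ μ : K, ∃ a : 𝒪 p K, μ ∈ primitiveRoots p K →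
      (IsUnit a ∧ 1 - μ = (1 - (θ : K)) * (a : K)) := by
    intro μ
    by_cases hμ : μ ∈ primitiveRoots p K
    · have hμp : IsPrimitiveRoot μ p := isPrimitiveRoot_of_mem_primitiveRoots hμ
      obtain ⟨j, hjp, hjeq⟩ := hθ.eq_pow_of_pow_eq_one hμp.pow_eq_one
      have hj0 : j ≠ 0 := by
        rintro rfl
        exact (hμp.ne_one (by omega)) (by rw [← hjeq]; simp)
      have hcop : j.Coprime p := Nat.Coprime.symm
        (((Fact.out : p.Prime).coprime_iff_not_dvd).mpr
          (fun h => by have := Nat.le_of_dvd (Nat.pos_of_ne_zero hj0) h; omega))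
      have hζj : IsPrimitiveRoot ((θ : K) ^ j) p := hθ.pow_of_coprime j hcop
      obtain ⟨c, hcp, hceq⟩ := hζj.eq_pow_of_pow_eq_one hθ.pow_eq_one
      -- transfer hceq to 𝒪
      have hceqO : (θ ^ j) ^ c = θ := by
        apply Subtype.coe_injective
        push_cast
        exact hceq
      set a : 𝒪 p K := ∑ m ∈ Finset.range j, θ ^ m with ha
      set b : 𝒪 p K := ∑ m ∈ Finset.range c, (θ ^ j) ^ m with hb
      have hga : a * (θ - 1) = θ ^ j - 1 := geom_sum_mul θ j
      have hgb : b * (θ ^ j - 1) = θ - 1 := by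
        rw [geom_sum_mul, hceqO]
      have hab : a * b = 1 := by
        have h2 : (a * b) * (θ - 1) = 1 * (θ - 1) := by
          calc (a * b) * (θ - 1) = b * (a * (θ - 1)) := by ring
          _ = b * (θ ^ j - 1) := by rw [hga]
          _ = θ - 1 := hgb
          _ = 1 * (θ - 1) := by ring
        exact mul_right_cancel₀ hκ h2
      refine ⟨a, fun _ => ⟨IsUnit.of_mul_eq_one (a := a) b hab, ?_⟩⟩
      have : ((1 : 𝒪 p K) - θ ^ j) = (1 - θ) * a := by
        linear_combination hga
      have hco := congrArg (Subtype.val : 𝒪 p K → K) this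
      push_cast at hco
      rw [← hjeq]
      convert hco using 2
    · exact ⟨1, fun h => absurd h hμ⟩
  choose a ha using key
  -- the product identity in K
  have hcard : (primitiveRoots p K).card = p - 1 := by
    rw [hθ.card_primitiveRoots, Nat.totient_prime Fact.out]
  have hprodK : ((p : ℕ) : K) = ∏ μ ∈ primitiveRoots p K, (1 - μ) := by
    have h1 : Polynomial.eval 1 (Polynomial.cyclotomic p K) = (p : K) :=
      Polynomial.eval_one_cyclotomic_prime
    rw [Polynomial.cyclotomic_eq_prod_X_sub_primitiveRoots hθ] at h1
    simpa [Polynomial.eval_prod] using h1.symm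
  set A : 𝒪 p K := ∏ μ ∈ primitiveRoots p K, a μ with hA
  have hAunit : IsUnit A := by
    rw [hA]
    exact Finset.prod_induction _ IsUnit (fun u v hu hv => hu.mul hv) isUnit_one
      (fun μ hμ => (ha μ hμ).1)
  have heven : Even (p - 1) := by
    have hodd : Odd p := (Fact.out : p.Prime).odd_of_ne_two (by omega)
    obtain ⟨m, hm⟩ := hodd
    exact ⟨m, by omega⟩
  have hAcoe : (A : K) = ∏ μ ∈ primitiveRoots p K, ((a μ : K)) := by
    rw [hA]
    exact map_prod ((𝒪 p K).val) _ _
  have hmain : (p : 𝒪 p K) = (θ - 1) ^ (p - 1) * A := by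
    apply Subtype.coe_injective
    push_cast
    rw [hAcoe, hprodK, Finset.prod_congr rfl (fun μ hμ => (ha μ hμ).2), Finset.prod_mul_distrib,
      Finset.prod_const, hcard]
    congr 1
    rw [show (1 : K) - (θ : K) = -((θ : K) - 1) by ring, heven.neg_pow]
  have hassoc : Associated ((θ - 1) ^ (p - 1)) (p : 𝒪 p K) := by
    obtain ⟨u, hu⟩ := hAunit
    exact ⟨u, by rw [hu, ← hmain]⟩
  rw [pid, Ideal.span_singleton_pow]
  exact Ideal.span_singleton_eq_span_singleton.mpr hassoc

open Pointwise

lemma span_smul_set (c : 𝒪 p K) (s : Set (𝒪 p K)) :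
    Ideal.span (c • s) = c • Ideal.span s :=
  (Submodule.smul_span c s).symm

lemma pid_shift (hp : 5 ≤ p) (hθ : IsPrimitiveRoot (θ : K) p) (i : ℕ) :
    pid p K θ ^ (i + (p - 1)) = ((p : ℕ) : 𝒪 p K) • (pid p K θ ^ i) := by
  rw [pow_add, pid_pow_eq p K θ hp hθ, ← Submodule.ideal_span_singleton_smul,
    smul_eq_mul, mul_comm]

lemma image2_coe_smul (n m : ℕ) (S T : Ideal (𝒪 p K)) :
    Set.image2 (fun x y => γ x y) ((((n : ℕ) : 𝒪 p K) • S : Ideal (𝒪 p K)) : Set (𝒪 p K))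
      ((((m : ℕ) : 𝒪 p K) • T : Ideal (𝒪 p K)) : Set (𝒪 p K))
      = ((n * m : ℕ) : 𝒪 p K) • Set.image2 (fun x y => γ x y)
          (S : Set (𝒪 p K)) (T : Set (𝒪 p K)) := by
  rw [Submodule.coe_pointwise_smul, Submodule.coe_pointwise_smul]
  ext v
  simp only [Set.mem_image2, Set.mem_smul_set, smul_eq_mul]
  constructor
  · rintro ⟨x, ⟨x', hx', rfl⟩, y, ⟨y', hy', rfl⟩, rfl⟩
    refine ⟨γ x' y', ⟨x', hx', y', hy', rfl⟩, ?_⟩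
    rw [natmul_left, natmul_right]
    push_cast
    ring
  · rintro ⟨w, ⟨x', hx', y', hy', rfl⟩, rfl⟩
    refine ⟨(n : 𝒪 p K) * x', ⟨x', hx', rfl⟩, (m : 𝒪 p K) * y', ⟨y', hy', rfl⟩, ?_⟩
    rw [natmul_left, natmul_right]
    push_cast
    ring

lemma W_shift (hp : 5 ≤ p) (hθ : IsPrimitiveRoot (θ : K) p) (i k : ℕ) :
    Wid p K θ γ (i + (p - 1)) (k + 1)
      = ((p ^ (k + 1) : ℕ) : 𝒪 p K) • Wid p K θ γ i (k + 1) := by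
  induction k with
  | zero => simpa [Wid] using pid_shift p K θ hp hθ i
  | succ k ih =>
    show Wid p K θ γ (i + (p - 1)) (k + 2) = _
    simp only [Wid]
    rw [ih, pid_shift p K θ hp hθ i, image2_coe_smul, span_smul_set]
    congr 2

lemma mem_shift (hp : 5 ≤ p) (hθ : IsPrimitiveRoot (θ : K) p) (i : ℕ) (x : 𝒪 p K) :
    x ∈ pid p K θ ^ (i + (p - 1)) ↔
      ∃ x' ∈ pid p K θ ^ i, ((p : ℕ) : 𝒪 p K) * x' = x := by
  rw [pid_shift p K θ hp hθ i, ← SetLike.mem_coe, Submodule.coe_pointwise_smul]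
  simp [Set.mem_smul_set, smul_eq_mul]

lemma J_shift (hp : 5 ≤ p) (hθ : IsPrimitiveRoot (θ : K) p) (i : ℕ) :
    Jid p K θ γ (i + (p - 1)) = ((p ^ 3 : ℕ) : 𝒪 p K) • Jid p K θ γ i := by
  rw [Jid, Jid, ← span_smul_set]
  congr 1
  ext v
  simp only [Set.mem_setOf_eq, Set.mem_smul_set, smul_eq_mul]
  constructor
  · rintro ⟨x, hx, y, hy, z, hz, rfl⟩
    obtain ⟨x', hx', rfl⟩ := (mem_shift p K θ hp hθ i x).1 hx
    obtain ⟨y', hy', rfl⟩ := (mem_shift p K θ hp hθ i y).1 hy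
    obtain ⟨z', hz', rfl⟩ := (mem_shift p K θ hp hθ i z).1 hz
    refine ⟨γ (γ x' y') z' + γ (γ y' z') x' + γ (γ z' x') y',
      ⟨x', hx', y', hy', z', hz', rfl⟩, ?_⟩
    simp only [natmul_left, natmul_right, map_add, LinearMap.add_apply, mul_add]
    push_cast
    ring
  · rintro ⟨w, ⟨x', hx', y', hy', z', hz', rfl⟩, rfl⟩
    refine ⟨((p : ℕ) : 𝒪 p K) * x', (mem_shift p K θ hp hθ i _).2 ⟨x', hx', rfl⟩,
      ((p : ℕ) : 𝒪 p K) * y', (mem_shift p K θ hp hθ i _).2 ⟨y', hy', rfl⟩,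
      ((p : ℕ) : 𝒪 p K) * z', (mem_shift p K θ hp hθ i _).2 ⟨z', hz', rfl⟩, ?_⟩
    simp only [natmul_left, natmul_right, map_add, LinearMap.add_apply, mul_add]
    push_cast
    ring

open Pointwise in
/-- For `γ ∈ H`: `W_k(i+(p−1)) = p^k·W_k(i)` for every `k ≥ 1`,
and `J_{i+(p−1)}(γ) = p³·J_i(γ)`. -/
theorem frame_W_J_periodicity (hp : 5 ≤ p) (hθ : IsPrimitiveRoot (θ : K) p)
    (hgen : Algebra.adjoin ℚ_[p] {(θ : K)} = ⊤)
    (hγ : IsPEquivariant p K θ γ) (i : ℕ) :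
    (∀ k : ℕ, 1 ≤ k →
      Wid p K θ γ (i + (p - 1)) k = ((p : 𝒪 p K) ^ k) • Wid p K θ γ i k) ∧
    Jid p K θ γ (i + (p - 1)) = ((p : 𝒪 p K) ^ 3) • Jid p K θ γ i := by
  constructor
  · intro k hk
    obtain ⟨k', rfl⟩ : ∃ k', k = k' + 1 := ⟨k - 1, by omega⟩
    rw [show ((p : 𝒪 p K)) ^ (k' + 1) = ((p ^ (k' + 1) : ℕ) : 𝒪 p K) by push_cast; ring]
    exact W_shift p K θ γ hp hθ i k'
  · rw [show ((p : 𝒪 p K)) ^ 3 = ((p ^ 3 : ℕ) : 𝒪 p K) by push_cast; ring]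
    exact J_shift p K θ γ hp hθ i

end MaximalClassFrame
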